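/- Let E be a Banach space, V ⊆ E open, and Z : ℝ × V → E a map which is measurable in t, satisfies ‖Z(t,x)‖ ≤ kc for all (t,x) ∈ J × V, and is Lipschitz in x with constant kc uniformly in t (where k, c > 0). Fix x₀ ∈ V, r > 0 with the closed ball B̄(x₀, 2r) ⊆ V, and T₀ < r/(kc). Then for every x ∈ B(x₀, r − kcT₀) there exists a unique continuous curve f : [t₀ − T₀, t₀ + T₀] → V with f(t) = x + ∫_{t₀}^t Z(s, f(s)) ds for all t. -/

import Mathlib

open Filter Function Set Metric TopologicalSpace intervalIntegral MeasureTheory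
open scoped Topology NNReal ENNReal Nat Interval

noncomputable section

namespace Stmt4Aux

variable {E : Type*} [NormedAddCommGroup E] [NormedSpace ℝ E]

/-- Composition of a Carathéodory-type map with a simple function is a.e. strongly
measurable. -/
lemma aesm_comp_simpleFunc (Z : ℝ → E → E) (W : Set E) (μ : Measure ℝ)
    (hmeas : ∀ y ∈ W, AEStronglyMeasurable (fun t => Z t y) μ)
    (ψ : SimpleFunc ℝ E) (hψ : ∀ t, ψ t ∈ W) :
    AEStronglyMeasurable (fun t => Z t (ψ t)) μ := by
  have hrw : (fun t => Z t (ψ t)) =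
      fun t => ∑ c ∈ ψ.range, (ψ ⁻¹' {c}).indicator (fun s => Z s c) t := by
    funext t
    rw [Finset.sum_eq_single_of_mem (ψ t) (ψ.mem_range_self t)]
    · exact (Set.indicator_of_mem (show t ∈ ψ ⁻¹' {ψ t} from rfl) (fun s => Z s (ψ t))).symm
    · intro c hc hne
      apply Set.indicator_of_notMem
      intro hmem
      exact hne ((Set.mem_singleton_iff.mp hmem).symm)
  rw [hrw]
  refine Finset.aestronglyMeasurable_fun_sum _ fun c hc => ?_
  obtain ⟨t, ht⟩ := SimpleFunc.mem_range.mp hc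
  exact (hmeas c (ht ▸ hψ t)).indicator (ψ.measurableSet_fiber c)

/-- Carathéodory measurability lemma: if `Z` is measurable in `t` and Lipschitz in `x`
on `V`, and `h` is continuous with separable range contained in `V`, then
`t ↦ Z t (h t)` is a.e. strongly measurable. -/
lemma cara_meas (V : Set E) (Z : ℝ → E → E) (J : Set ℝ) (L : ℝ)
    (hmeas : ∀ y ∈ V, AEStronglyMeasurable (fun t => Z t y) (volume.restrict J))
    (hlip : ∀ t ∈ J, ∀ y ∈ V, ∀ z ∈ V, ‖Z t y - Z t z‖ ≤ L * ‖y - z‖)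
    (S : Set ℝ) (hSJ : S ⊆ J) (hSm : MeasurableSet S)
    (h : ℝ → E) (hh : Continuous h) (hsep : IsSeparable (Set.range h))
    (hhV : ∀ t, h t ∈ V) :
    AEStronglyMeasurable (fun t => Z t (h t)) (volume.restrict S) := by
  letI : MeasurableSpace E := borel E
  haveI : BorelSpace E := ⟨rfl⟩
  haveI : SeparableSpace (Set.range h) := hsep.separableSpace
  have hmeas' : ∀ y ∈ V, AEStronglyMeasurable (fun t => Z t y) (volume.restrict S) :=
    fun y hy => (hmeas y hy).mono_measure (Measure.restrict_mono hSJ le_rfl)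
  set ph : ℕ → SimpleFunc ℝ E :=
    SimpleFunc.approxOn h hh.measurable (Set.range h) (h 0) (Set.mem_range_self (f := h) 0) with hph
  have hphV : ∀ n t, ph n t ∈ V := by
    intro n t
    obtain ⟨u, hu⟩ := SimpleFunc.approxOn_mem hh.measurable (Set.mem_range_self (f := h) 0) n t
    exact hu ▸ hhV u
  refine aestronglyMeasurable_of_tendsto_ae atTop
    (fun n => aesm_comp_simpleFunc Z V _ hmeas' (ph n) (hphV n)) ?_
  filter_upwards [ae_restrict_mem hSm] with t ht
  have h1 : Tendsto (fun n => (ph n) t) atTop (𝓝 (h t)) :=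
    SimpleFunc.tendsto_approxOn hh.measurable (Set.mem_range_self (f := h) 0)
      (subset_closure (mem_range_self t))
  rw [tendsto_iff_norm_sub_tendsto_zero]
  have h2 : Tendsto (fun n => L * ‖(ph n) t - h t‖) atTop (𝓝 0) := by
    have := (tendsto_iff_norm_sub_tendsto_zero.mp h1).const_mul L
    simpa using this
  exact squeeze_zero (fun n => norm_nonneg _)
    (fun n => hlip t (hSJ ht) _ (hphV n t) _ (hhV t)) h2

/-- Data for the Carathéodory existence theorem (analogue of `PicardLindelof`). -/
structure Cara (E : Type*) [NormedAddCommGroup E] [NormedSpace ℝ E] where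
  Z : ℝ → E → E
  (tMin tMax : ℝ)
  t₀ : Icc tMin tMax
  x₀ : E
  (C R : ℝ≥0)
  lip : ∀ t ∈ Icc tMin tMax, LipschitzOnWith C (Z t) (closedBall x₀ R)
  bound : ∀ t ∈ Icc tMin tMax, ∀ y ∈ closedBall x₀ R, ‖Z t y‖ ≤ C
  C_mul_le_R : (C : ℝ) * max (tMax - t₀) (t₀ - tMin) ≤ R
  meas : ∀ h : ℝ → E, Continuous h → IsSeparable (Set.range h) →
    (∀ t, h t ∈ closedBall x₀ R) →
    AEStronglyMeasurable (fun t => Z t (h t)) (volume.restrict (Icc tMin tMax))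

namespace Cara

variable (v : Cara E)

theorem tMin_le_tMax : v.tMin ≤ v.tMax := v.t₀.2.1.trans v.t₀.2.2

protected theorem nonempty_Icc : (Icc v.tMin v.tMax).Nonempty :=
  nonempty_Icc.2 v.tMin_le_tMax

/-- The maximum of distances from `t₀` to the endpoints of `[tMin, tMax]`. -/
def tDist : ℝ := max (v.tMax - v.t₀) (v.t₀ - v.tMin)

theorem tDist_nonneg : 0 ≤ v.tDist :=
  le_max_iff.2 <| Or.inl <| sub_nonneg.2 v.t₀.2.2

theorem dist_t₀_le (t : Icc v.tMin v.tMax) : dist t v.t₀ ≤ v.tDist := by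
  rw [Subtype.dist_eq, Real.dist_eq]
  rcases le_total t v.t₀ with ht | ht
  · rw [abs_of_nonpos (sub_nonpos.2 <| Subtype.coe_le_coe.2 ht), neg_sub]
    exact (sub_le_sub_left t.2.1 _).trans (le_max_right _ _)
  · rw [abs_of_nonneg (sub_nonneg.2 <| Subtype.coe_le_coe.2 ht)]
    exact (sub_le_sub_right t.2.2 _).trans (le_max_left _ _)

/-- Projection of `ℝ` onto `[tMin, tMax]`. -/
def proj : ℝ → Icc v.tMin v.tMax := projIcc v.tMin v.tMax v.tMin_le_tMax

theorem proj_coe (t : Icc v.tMin v.tMax) : v.proj t = t := projIcc_val _ _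

theorem proj_of_mem {t : ℝ} (ht : t ∈ Icc v.tMin v.tMax) : ↑(v.proj t) = t := by
  simp only [proj, projIcc_of_mem v.tMin_le_tMax ht]

theorem continuous_proj : Continuous v.proj := continuous_projIcc

/-- The space of `C`-Lipschitz curves through `(t₀, x₀)`. -/
structure FunSpace where
  toFun : Icc v.tMin v.tMax → E
  map_t₀' : toFun v.t₀ = v.x₀
  lipschitz' : LipschitzWith v.C toFun

namespace FunSpace

variable {v}
variable (f : FunSpace v)

instance : CoeFun (FunSpace v) fun _ => Icc v.tMin v.tMax → E := ⟨toFun⟩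

instance : Inhabited v.FunSpace :=
  ⟨⟨fun _ => v.x₀, rfl, (LipschitzWith.const _).weaken zero_le⟩⟩

protected theorem lipschitz : LipschitzWith v.C f := f.lipschitz'

protected theorem continuous : Continuous f := f.lipschitz.continuous

/-- Each curve in `FunSpace` is continuous. -/
def toContinuousMap : v.FunSpace ↪ C(Icc v.tMin v.tMax, E) :=
  ⟨fun f => ⟨f, f.continuous⟩, fun f g h => by cases f; cases g; simpa using h⟩

instance : MetricSpace v.FunSpace :=
  MetricSpace.induced toContinuousMap toContinuousMap.injective inferInstance

theorem isUniformInducing_toContinuousMap : IsUniformInducing (@toContinuousMap _ _ _ v) :=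
  ⟨rfl⟩

theorem range_toContinuousMap :
    range toContinuousMap =
      {f : C(Icc v.tMin v.tMax, E) | f v.t₀ = v.x₀ ∧ LipschitzWith v.C f} := by
  ext f; constructor
  · rintro ⟨⟨f, hf₀, hf_lip⟩, rfl⟩; exact ⟨hf₀, hf_lip⟩
  · rcases f with ⟨f, hf⟩; rintro ⟨hf₀, hf_lip⟩; exact ⟨⟨f, hf₀, hf_lip⟩, rfl⟩

theorem ext' {f g : v.FunSpace} (h : ∀ t, f t = g t) : f = g := by
  cases f; cases g
  simp only [mk.injEq]
  exact funext h

theorem map_t₀ : f v.t₀ = v.x₀ := f.map_t₀'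

protected theorem mem_closedBall (t : Icc v.tMin v.tMax) : f t ∈ closedBall v.x₀ v.R :=
  calc
    dist (f t) v.x₀ = dist (f t) (f.toFun v.t₀) := by rw [f.map_t₀']
    _ ≤ v.C * dist t v.t₀ := f.lipschitz.dist_le_mul _ _
    _ ≤ v.C * v.tDist := mul_le_mul_of_nonneg_left (v.dist_t₀_le _) v.C.2
    _ ≤ v.R := v.C_mul_le_R

/-- `F(t) = Z(π t, γ(π t))` where `π` is the projection onto `[tMin, tMax]`. -/
def vComp (t : ℝ) : E :=
  v.Z (v.proj t) (f (v.proj t))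

theorem vComp_apply_coe (t : Icc v.tMin v.tMax) : f.vComp t = v.Z t (f t) := by
  simp only [vComp, proj_coe]

theorem norm_vComp_le (t : ℝ) : ‖f.vComp t‖ ≤ v.C :=
  v.bound _ (v.proj t).2 _ (f.mem_closedBall _)

theorem aesm_vComp : AEStronglyMeasurable f.vComp (volume.restrict (Icc v.tMin v.tMax)) := by
  haveI : CompactSpace (Icc v.tMin v.tMax) := isCompact_iff_compactSpace.mp isCompact_Icc
  have hc : Continuous fun t => f (v.proj t) := f.continuous.comp v.continuous_proj
  have hsep : IsSeparable (Set.range fun t => f (v.proj t)) := by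
    refine ((isCompact_range f.continuous).isSeparable).mono ?_
    exact range_comp_subset_range _ _
  have hmem : ∀ t, f (v.proj t) ∈ closedBall v.x₀ v.R := fun t => f.mem_closedBall _
  have h := v.meas _ hc hsep hmem
  refine h.congr ?_
  filter_upwards [ae_restrict_mem measurableSet_Icc] with t ht
  simp only [vComp, v.proj_of_mem ht]

theorem intervalIntegrable_vComp (t₁ t₂ : Icc v.tMin v.tMax) :
    IntervalIntegrable f.vComp volume t₁ t₂ := by
  rw [intervalIntegrable_iff]
  have hsub : Ι (t₁ : ℝ) t₂ ⊆ Icc v.tMin v.tMax :=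
    fun s hs => uIcc_subset_Icc t₁.2 t₂.2 (Ioc_subset_Icc_self hs)
  have hfin : volume (Ι (t₁ : ℝ) t₂) < ⊤ := measure_Ioc_lt_top
  refine Integrable.mono' (g := fun _ => (v.C : ℝ))
    (integrableOn_const hfin.ne) ?_ ?_
  · exact f.aesm_vComp.mono_measure (Measure.restrict_mono hsub le_rfl)
  · exact ae_of_all _ fun t => f.norm_vComp_le t

/-- The Picard operator. -/
def next (f : FunSpace v) : FunSpace v where
  toFun t := v.x₀ + ∫ τ : ℝ in v.t₀..t, f.vComp τ
  map_t₀' := by simp only [integral_same, add_zero]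
  lipschitz' := LipschitzWith.of_dist_le_mul fun t₁ t₂ => by
    rw [dist_add_left, dist_eq_norm,
      integral_interval_sub_left (f.intervalIntegrable_vComp _ _)
        (f.intervalIntegrable_vComp _ _)]
    exact norm_integral_le_of_norm_le_const fun t _ => f.norm_vComp_le _

theorem next_apply (t : Icc v.tMin v.tMax) :
    f.next t = v.x₀ + ∫ τ : ℝ in v.t₀..t, f.vComp τ := rfl

theorem dist_apply_le_dist (f₁ f₂ : FunSpace v) (t : Icc v.tMin v.tMax) :
    dist (f₁ t) (f₂ t) ≤ dist f₁ f₂ :=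
  @ContinuousMap.dist_apply_le_dist _ _ _ _ _ (toContinuousMap f₁) (toContinuousMap f₂) _

theorem dist_le_of_forall {f₁ f₂ : FunSpace v} {d : ℝ} (h : ∀ t, dist (f₁ t) (f₂ t) ≤ d) :
    dist f₁ f₂ ≤ d :=
  (@ContinuousMap.dist_le_iff_of_nonempty _ _ _ _ _ (toContinuousMap f₁) (toContinuousMap f₂) _
    v.nonempty_Icc.to_subtype).2 h

instance [CompleteSpace E] : CompleteSpace v.FunSpace := by
  refine (completeSpace_iff_isComplete_range isUniformInducing_toContinuousMap).2
      (IsClosed.isComplete ?_)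
  rw [range_toContinuousMap, setOf_and]
  refine (isClosed_eq (continuous_eval_const _) continuous_const).inter ?_
  have : IsClosed {f : Icc v.tMin v.tMax → E | LipschitzWith v.C f} :=
    isClosed_setOf_lipschitzWith v.C
  exact this.preimage continuous_coeFun

theorem dist_next_apply_le_of_le {f₁ f₂ : FunSpace v} {n : ℕ} {d : ℝ}
    (h : ∀ t, dist (f₁ t) (f₂ t) ≤ (v.C * |t.1 - v.t₀|) ^ n / n ! * d) (t : Icc v.tMin v.tMax) :
    dist (next f₁ t) (next f₂ t) ≤ (v.C * |t.1 - v.t₀|) ^ (n + 1) / (n + 1)! * d := by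
  simp only [dist_eq_norm, next_apply, add_sub_add_left_eq_sub, ←
    intervalIntegral.integral_sub (intervalIntegrable_vComp _ _ _)
      (intervalIntegrable_vComp _ _ _),
    norm_integral_eq_norm_integral_uIoc] at *
  calc
    ‖∫ τ in Ι (v.t₀ : ℝ) t, f₁.vComp τ - f₂.vComp τ‖ ≤
        ∫ τ in Ι (v.t₀ : ℝ) t, v.C * ((v.C * |τ - v.t₀|) ^ n / n ! * d) := by
      refine norm_integral_le_of_norm_le (Continuous.integrableOn_uIoc (by fun_prop)) ?_
      refine (ae_restrict_mem measurableSet_Ioc).mono fun τ hτ ↦ ?_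
      refine (v.lip _ (v.proj τ).2).norm_sub_le_of_le (f₁.mem_closedBall _)
          (f₂.mem_closedBall _) ((h _).trans_eq ?_)
      rw [v.proj_of_mem]
      exact uIcc_subset_Icc v.t₀.2 t.2 <| Ioc_subset_Icc_self hτ
    _ = (v.C * |t.1 - v.t₀|) ^ (n + 1) / (n + 1)! * d := by
      simp_rw [mul_pow, div_eq_mul_inv, mul_assoc, MeasureTheory.integral_const_mul,
        MeasureTheory.integral_mul_const, integral_pow_abs_sub_uIoc, div_eq_mul_inv,
        pow_succ' (v.C : ℝ), Nat.factorial_succ, Nat.cast_mul, Nat.cast_succ, mul_inv, mul_assoc]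

theorem dist_iterate_next_apply_le (f₁ f₂ : FunSpace v) (n : ℕ) (t : Icc v.tMin v.tMax) :
    dist (next^[n] f₁ t) (next^[n] f₂ t) ≤ (v.C * |t.1 - v.t₀|) ^ n / n ! * dist f₁ f₂ := by
  induction n generalizing t with
  | zero =>
    rw [pow_zero, Nat.factorial_zero, Nat.cast_one, div_one, one_mul]
    exact dist_apply_le_dist f₁ f₂ t
  | succ n ihn =>
    rw [iterate_succ_apply', iterate_succ_apply']
    exact dist_next_apply_le_of_le ihn _

theorem dist_iterate_next_le (f₁ f₂ : FunSpace v) (n : ℕ) :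
    dist (next^[n] f₁) (next^[n] f₂) ≤ (v.C * v.tDist) ^ n / n ! * dist f₁ f₂ := by
  refine dist_le_of_forall fun t => (dist_iterate_next_apply_le _ _ _ _).trans ?_
  have : |(t - v.t₀ : ℝ)| ≤ v.tDist := v.dist_t₀_le t
  gcongr

end FunSpace

theorem exists_contracting_iterate :
    ∃ (N : ℕ) (K : _), ContractingWith K (FunSpace.next : v.FunSpace → v.FunSpace)^[N] := by
  rcases ((FloorSemiring.tendsto_pow_div_factorial_atTop (v.C * v.tDist)).eventually
    (gt_mem_nhds zero_lt_one)).exists with ⟨N, hN⟩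
  have : (0 : ℝ) ≤ (v.C * v.tDist) ^ N / N ! :=
    div_nonneg (pow_nonneg (mul_nonneg v.C.2 v.tDist_nonneg) _) (Nat.cast_nonneg _)
  exact ⟨N, ⟨_, this⟩, hN, LipschitzWith.of_dist_le_mul fun f g =>
    FunSpace.dist_iterate_next_le f g N⟩

theorem exists_fixed [CompleteSpace E] : ∃ f : v.FunSpace, f.next = f :=
  let ⟨_N, _K, hK⟩ := exists_contracting_iterate v
  ⟨_, hK.isFixedPt_fixedPoint_iterate⟩

/-- Any two fixed points of `next` coincide. -/
theorem fixed_unique [CompleteSpace E] {f g : v.FunSpace} (hf : f.next = f)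
    (hg : g.next = g) : f = g := by
  obtain ⟨N, K, hK⟩ := exists_contracting_iterate v
  have hfN : (FunSpace.next : v.FunSpace → v.FunSpace)^[N] f = f :=
    Function.IsFixedPt.iterate hf N
  have hgN : (FunSpace.next : v.FunSpace → v.FunSpace)^[N] g = g :=
    Function.IsFixedPt.iterate hg N
  have hd := hK.2.dist_le_mul f g
  rw [hfN, hgN] at hd
  have hK1 : (K : ℝ) < 1 := hK.1
  have h0 : dist f g ≤ 0 := by nlinarith [(dist_nonneg : (0:ℝ) ≤ dist f g)]
  exact dist_le_zero.mp h0


/-- Existence and uniqueness of the integral-equation solution. -/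
theorem solution [CompleteSpace E] (v : Cara E)
    (W : Set E) (hWsub : closedBall v.x₀ v.R ⊆ W)
    (hbW : ∀ t ∈ Icc v.tMin v.tMax, ∀ y ∈ W, ‖v.Z t y‖ ≤ v.C)
    (hmW : ∀ h : ℝ → E, Continuous h → IsSeparable (Set.range h) → (∀ t, h t ∈ W) →
      AEStronglyMeasurable (fun t => v.Z t (h t)) (volume.restrict (Icc v.tMin v.tMax))) :
    ∃ f : ℝ → E,
      (ContinuousOn f (Icc v.tMin v.tMax) ∧
        ∀ t ∈ Icc v.tMin v.tMax, f t ∈ closedBall v.x₀ v.R ∧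
          f t = v.x₀ + ∫ s in (v.t₀ : ℝ)..t, v.Z s (f s)) ∧
      ∀ g : ℝ → E,
        (ContinuousOn g (Icc v.tMin v.tMax) ∧
          ∀ t ∈ Icc v.tMin v.tMax, g t ∈ W ∧ g t = v.x₀ + ∫ s in (v.t₀ : ℝ)..t, v.Z s (g s)) →
        ∀ t ∈ Icc v.tMin v.tMax, g t = f t := by
  obtain ⟨F, hF⟩ := v.exists_fixed
  refine ⟨fun t => F (v.proj t), ⟨(F.continuous.comp v.continuous_proj).continuousOn, ?_⟩, ?_⟩
  · intro t ht
    have hproj : v.proj t = ⟨t, ht⟩ := Subtype.ext (v.proj_of_mem ht)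
    refine ⟨F.mem_closedBall _, ?_⟩
    have key : F ⟨t, ht⟩ = v.x₀ + ∫ τ in (v.t₀ : ℝ)..t, F.vComp τ := by
      conv_lhs => rw [← hF]
      rfl
    show F (v.proj t) = v.x₀ + ∫ s in (v.t₀ : ℝ)..t, v.Z s (F (v.proj s))
    rw [hproj, key]
    congr 1
    apply intervalIntegral.integral_congr
    intro s hs
    have hsm : s ∈ Icc v.tMin v.tMax := uIcc_subset_Icc v.t₀.2 ht hs
    show v.Z (v.proj s) (F (v.proj s)) = v.Z s (F (v.proj s))
    rw [v.proj_of_mem hsm]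
  · rintro g ⟨hgc, hgprop⟩ t ht
    have hgW : ∀ s ∈ Icc v.tMin v.tMax, g s ∈ W := fun s hs => (hgprop s hs).1
    have hgpc : Continuous fun s => g ↑(v.proj s) :=
      hgc.comp_continuous (continuous_subtype_val.comp v.continuous_proj)
        fun s => (v.proj s).2
    have hgpW : ∀ s, g ↑(v.proj s) ∈ W := fun s => hgW _ (v.proj s).2
    have hsep : IsSeparable (Set.range fun s => g ↑(v.proj s)) := by
      have hcomp : IsCompact (g '' Icc v.tMin v.tMax) :=
        isCompact_Icc.image_of_continuousOn hgc
      refine hcomp.isSeparable.mono ?_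
      rintro - ⟨s, rfl⟩
      exact ⟨(v.proj s), (v.proj s).2, rfl⟩
    have hZg : AEStronglyMeasurable (fun s => v.Z s (g s))
        (volume.restrict (Icc v.tMin v.tMax)) := by
      refine (hmW _ hgpc hsep hgpW).congr ?_
      filter_upwards [ae_restrict_mem measurableSet_Icc] with s hs
      rw [v.proj_of_mem hs]
    have hInt : ∀ t₁ ∈ Icc v.tMin v.tMax, ∀ t₂ ∈ Icc v.tMin v.tMax,
        IntervalIntegrable (fun s => v.Z s (g s)) volume t₁ t₂ := by
      intro t₁ h₁ t₂ h₂
      rw [intervalIntegrable_iff]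
      have hsub2 : Ι t₁ t₂ ⊆ Icc v.tMin v.tMax :=
        fun s hs => uIcc_subset_Icc h₁ h₂ (Ioc_subset_Icc_self hs)
      refine Integrable.mono' (g := fun _ => (v.C : ℝ))
        (integrableOn_const measure_Ioc_lt_top.ne)
        (hZg.mono_measure (Measure.restrict_mono hsub2 le_rfl)) ?_
      filter_upwards [ae_restrict_mem measurableSet_uIoc] with s hs
      exact hbW s (hsub2 hs) _ (hgW s (hsub2 hs))
    have hgLip : LipschitzWith v.C fun s : Icc v.tMin v.tMax => g s := by
      apply LipschitzWith.of_dist_le_mul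
      intro t₁ t₂
      rw [dist_eq_norm, (hgprop t₁ t₁.2).2, (hgprop t₂ t₂.2).2, add_sub_add_left_eq_sub,
        integral_interval_sub_left (hInt _ v.t₀.2 _ t₁.2) (hInt _ v.t₀.2 _ t₂.2),
        Subtype.dist_eq, Real.dist_eq]
      refine intervalIntegral.norm_integral_le_of_norm_le_const fun s hs => ?_
      have hsm : s ∈ Icc v.tMin v.tMax := uIcc_subset_Icc t₂.2 t₁.2 (Ioc_subset_Icc_self hs)
      exact hbW s hsm _ (hgW s hsm)
    have hgt₀ : g ↑v.t₀ = v.x₀ := by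
      have := (hgprop _ v.t₀.2).2
      simpa using this
    set G : v.FunSpace := ⟨fun s : Icc v.tMin v.tMax => g s, hgt₀, hgLip⟩ with hGdef
    have hGfix : G.next = G := by
      apply FunSpace.ext'
      intro s
      show v.x₀ + ∫ τ in (v.t₀ : ℝ)..(s : ℝ), G.vComp τ = g s
      rw [(hgprop s s.2).2]
      congr 1
      apply intervalIntegral.integral_congr
      intro τ hτ
      have hτm : τ ∈ Icc v.tMin v.tMax := uIcc_subset_Icc v.t₀.2 s.2 hτ
      show v.Z (v.proj τ) (g ↑(v.proj τ)) = v.Z τ (g τ)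
      rw [v.proj_of_mem hτm]
    have huniq : G = F := v.fixed_unique hGfix hF
    have hproj : v.proj t = ⟨t, ht⟩ := Subtype.ext (v.proj_of_mem ht)
    calc g t = G ⟨t, ht⟩ := rfl
      _ = F ⟨t, ht⟩ := by rw [huniq]
      _ = F (v.proj t) := by rw [hproj]

end Cara


end Stmt4Aux

end

open Stmt4Aux

/-- Carathéodory existence and uniqueness of integral curves of a
time-dependent vector field `Z` which is measurable in `t`, bounded by `k*c` and
`k*c`-Lipschitz in `x`. -/
theorem stmt4 {E : Type*} [NormedAddCommGroup E] [NormedSpace ℝ E] [CompleteSpace E]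
    (V : Set E) (hV : IsOpen V) (Z : ℝ → E → E) (k c : ℝ) (hk : 0 < k) (hc : 0 < c)
    (J : Set ℝ) (t₀ T₀ r : ℝ) (hr : 0 < r) (hT₀ : 0 < T₀)
    (hJ : Set.Icc (t₀ - T₀) (t₀ + T₀) ⊆ J)
    (hmeas : ∀ x ∈ V,
      MeasureTheory.AEStronglyMeasurable (fun t => Z t x) (MeasureTheory.volume.restrict J))
    (hbound : ∀ t ∈ J, ∀ x ∈ V, ‖Z t x‖ ≤ k * c)
    (hlip : ∀ t ∈ J, ∀ x ∈ V, ∀ y ∈ V, ‖Z t x - Z t y‖ ≤ k * c * ‖x - y‖)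
    (x₀ : E) (hball : Metric.closedBall x₀ (2 * r) ⊆ V)
    (hT : T₀ < r / (k * c)) (x : E) (hx : x ∈ Metric.ball x₀ (r - k * c * T₀)) :
    ∃ f : ℝ → E,
      (ContinuousOn f (Set.Icc (t₀ - T₀) (t₀ + T₀)) ∧
        ∀ t ∈ Set.Icc (t₀ - T₀) (t₀ + T₀),
          f t ∈ V ∧ f t = x + ∫ s in t₀..t, Z s (f s)) ∧
      ∀ g : ℝ → E,
        (ContinuousOn g (Set.Icc (t₀ - T₀) (t₀ + T₀)) ∧
          ∀ t ∈ Set.Icc (t₀ - T₀) (t₀ + T₀),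
            g t ∈ V ∧ g t = x + ∫ s in t₀..t, Z s (g s)) →
        ∀ t ∈ Set.Icc (t₀ - T₀) (t₀ + T₀), g t = f t := by
  have hkc : 0 < k * c := mul_pos hk hc
  have hkcT : 0 < k * c * T₀ := mul_pos hkc hT₀
  have ht₀mem : t₀ ∈ Set.Icc (t₀ - T₀) (t₀ + T₀) := by
    constructor <;> linarith
  rw [Metric.mem_ball] at hx
  have hsub : Metric.closedBall x (k * c * T₀) ⊆ V := by
    intro y hy
    apply hball
    rw [Metric.mem_closedBall] at hy ⊢
    have htri := dist_triangle y x x₀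
    linarith
  have hTr : k * c * T₀ < r := by
    rw [lt_div_iff₀ hkc] at hT
    linarith [hT]
  set v : Cara E :=
    { Z := Z, tMin := t₀ - T₀, tMax := t₀ + T₀, t₀ := ⟨t₀, ht₀mem⟩, x₀ := x,
      C := ⟨k * c, hkc.le⟩, R := ⟨k * c * T₀, hkcT.le⟩,
      lip := fun t ht => by
        apply LipschitzOnWith.of_dist_le_mul
        intro y hy z hz
        rw [dist_eq_norm, dist_eq_norm]
        exact hlip t (hJ ht) y (hsub hy) z (hsub hz)
      bound := fun t ht y hy => hbound t (hJ ht) y (hsub hy)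
      C_mul_le_R := by
        have hmax : max ((t₀ + T₀) - t₀) (t₀ - (t₀ - T₀)) = T₀ := by
          rw [add_sub_cancel_left, sub_sub_cancel, max_self]
        show k * c * max ((t₀ + T₀) - t₀) (t₀ - (t₀ - T₀)) ≤ k * c * T₀
        rw [hmax]
      meas := fun h hh hsep hhV =>
        cara_meas V Z J (k * c) hmeas hlip (Set.Icc (t₀ - T₀) (t₀ + T₀)) hJ
          measurableSet_Icc h hh hsep fun t => hsub (hhV t) } with hvdef
  obtain ⟨f, ⟨hf1, hf2⟩, hf3⟩ :=
    v.solution V hsub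
      (fun t ht y hy => hbound t (hJ ht) y hy)
      (fun h hh hsep hhV =>
        cara_meas V Z J (k * c) hmeas hlip (Set.Icc (t₀ - T₀) (t₀ + T₀)) hJ
          measurableSet_Icc h hh hsep hhV)
  exact ⟨f, ⟨hf1, fun t ht => ⟨hsub (hf2 t ht).1, (hf2 t ht).2⟩⟩,
    fun g hg => hf3 g ⟨hg.1, hg.2⟩⟩
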